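/- arXiv:2503.22702 — 7 statements merged into one kernel-verified Lean document; each statement's English description precedes it below -/
import Mathlib

section
/- For all natural numbers r ≤ n and real numbers x and 0 < q < 1, the q-Bernstein polynomial admits the expansion B_{r,n}(x, q) = Σ_{m=0}^{n} C(n, m) · S(n-m, r) · B_m^{(r)}(1 - [x]_{q^{-1}}) · ([x]_q)^r, where S denotes Stirling numbers of the second kind and B_m^{(r)} the Bernoulli polynomial of order r. -/
open PowerSeries

/-- The `q`-analog `[t]_q = (q^t - 1)/(q - 1)`, where `q ^ t` is the real power. -/
noncomputable def qnum (q t : ℝ) : ℝ := (q ^ t - 1) / (q - 1)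

/-- The `q`-Bernstein polynomial `B_{r,n}(x,q) = C(n,r) ([x]_q)^r ([1-x]_q)^{n-r}`. -/
noncomputable def qBernstein (r n : ℕ) (x q : ℝ) : ℝ :=
  (n.choose r : ℝ) * (qnum q x) ^ r * (qnum q (1 - x)) ^ (n - r)

lemma key_id (S : ℕ → ℕ → ℝ) (B : ℕ → ℕ → ℝ → ℝ)
    (hS : ∀ m : ℕ, PowerSeries.mk (fun k => S k m / (k.factorial : ℝ)) =
      ((m.factorial : ℝ)⁻¹) • (PowerSeries.exp ℝ - 1) ^ m)
    (hB : ∀ (ρ : ℕ) (y : ℝ),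
      (PowerSeries.exp ℝ - 1) ^ ρ * PowerSeries.mk (fun k => B k ρ y / (k.factorial : ℝ)) =
        PowerSeries.X ^ ρ * PowerSeries.rescale y (PowerSeries.exp ℝ))
    (r n : ℕ) (hrn : r ≤ n) (y : ℝ) :
    (n.choose r : ℝ) * y ^ (n - r) =
      ∑ m ∈ Finset.range (n + 1), (n.choose m : ℝ) * S (n - m) r * B m r y := by
  have hps : (PowerSeries.mk fun k => S k r / (k.factorial : ℝ)) *
      (PowerSeries.mk fun k => B k r y / (k.factorial : ℝ)) =
      ((r.factorial : ℝ)⁻¹) • (PowerSeries.X ^ r * PowerSeries.rescale y (PowerSeries.exp ℝ)) := by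
    rw [hS r, smul_mul_assoc, hB r y]
  have hc := congrArg (PowerSeries.coeff (R := ℝ) n) hps
  have hx : (PowerSeries.coeff (R := ℝ) n) (PowerSeries.X ^ r * PowerSeries.rescale y (PowerSeries.exp ℝ))
      = y ^ (n - r) * ((n - r).factorial : ℝ)⁻¹ := by
    obtain ⟨d, rfl⟩ := Nat.exists_eq_add_of_le hrn
    rw [add_comm r d, PowerSeries.coeff_X_pow_mul, PowerSeries.coeff_rescale,
      PowerSeries.coeff_exp]
    simp [Nat.add_sub_cancel_left]
  rw [PowerSeries.coeff_mul, map_smul, hx] at hc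
  simp only [PowerSeries.coeff_mk, smul_eq_mul] at hc
  rw [Finset.Nat.sum_antidiagonal_eq_sum_range_succ
    (fun a b => S a r / (a.factorial : ℝ) * (B b r y / (b.factorial : ℝ)))] at hc
  have hrefl : ∑ m ∈ Finset.range (n + 1), (n.choose m : ℝ) * S (n - m) r * B m r y
      = ∑ k ∈ Finset.range (n + 1), (n.choose k : ℝ) * S k r * B (n - k) r y := by
    rw [← Finset.sum_range_reflect]
    apply Finset.sum_congr rfl
    intro k hk
    have hk' : k ≤ n := Nat.lt_succ_iff.mp (Finset.mem_range.mp hk)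
    rw [Nat.add_sub_cancel, Nat.sub_sub_self hk', Nat.choose_symm hk']
  rw [hrefl]
  have h2 : ∑ k ∈ Finset.range (n + 1), (n.choose k : ℝ) * S k r * B (n - k) r y
      = (n.factorial : ℝ) * ∑ k ∈ Finset.range (n + 1),
        S k r / (k.factorial : ℝ) * (B (n - k) r y / ((n - k).factorial : ℝ)) := by
    rw [Finset.mul_sum]
    apply Finset.sum_congr rfl
    intro k hk
    have hk' : k ≤ n := Nat.lt_succ_iff.mp (Finset.mem_range.mp hk)
    rw [Nat.cast_choose ℝ hk']
    have h1 : (k.factorial : ℝ) ≠ 0 := Nat.cast_ne_zero.mpr k.factorial_ne_zero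
    have h2 : ((n - k).factorial : ℝ) ≠ 0 := Nat.cast_ne_zero.mpr (n - k).factorial_ne_zero
    field_simp
  rw [h2, hc, Nat.cast_choose ℝ hrn]
  have h1 : (r.factorial : ℝ) ≠ 0 := Nat.cast_ne_zero.mpr r.factorial_ne_zero
  have h2 : ((n - r).factorial : ℝ) ≠ 0 := Nat.cast_ne_zero.mpr (n - r).factorial_ne_zero
  field_simp


lemma qnum_one_sub (q x : ℝ) (hq0 : 0 < q) (hq1 : q ≠ 1) :
    qnum q (1 - x) = 1 - qnum q⁻¹ x := by
  unfold qnum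
  have hqx : (0:ℝ) < q ^ x := Real.rpow_pos_of_pos hq0 x
  have h1 : q ^ (1 - x) = q / q ^ x := by
    rw [Real.rpow_sub hq0, Real.rpow_one]
  have h2 : q⁻¹ ^ x = (q ^ x)⁻¹ := Real.inv_rpow hq0.le x
  have h3 : q - 1 ≠ 0 := sub_ne_zero.mpr hq1
  have h4 : q⁻¹ - 1 ≠ 0 := sub_ne_zero.mpr (by simp [inv_eq_one, hq1])
  have h5 : q⁻¹ - 1 = (1 - q) / q := by field_simp
  have h6 : (1:ℝ) - q ≠ 0 := fun h => hq1 (by linarith [sub_eq_zero.mp h])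
  rw [h1, h2, h5]
  field_simp
  ring


/-- Theorem 2.1 (case `Y = 1`): expansion of the `q`-Bernstein polynomials through the
Stirling numbers of the second kind `S` (egf `(e^v-1)^m/m!`) and the higher-order
Bernoulli polynomials `B k ρ y = B_k^{(ρ)}(y)` (egf `(v/(e^v-1))^ρ e^{yv}`). -/
theorem stmt_8 (q x : ℝ) (hq0 : 0 < q) (hq1 : q < 1) (r n : ℕ) (hrn : r ≤ n)
    (S : ℕ → ℕ → ℝ)
    (hS : ∀ m : ℕ, PowerSeries.mk (fun k => S k m / (k.factorial : ℝ)) =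
      ((m.factorial : ℝ)⁻¹) • (PowerSeries.exp ℝ - 1) ^ m)
    (B : ℕ → ℕ → ℝ → ℝ)
    (hB : ∀ (ρ : ℕ) (y : ℝ),
      (PowerSeries.exp ℝ - 1) ^ ρ * PowerSeries.mk (fun k => B k ρ y / (k.factorial : ℝ)) =
        PowerSeries.X ^ ρ * PowerSeries.rescale y (PowerSeries.exp ℝ)) :
    qBernstein r n x q =
      ∑ m ∈ Finset.range (n + 1),
        (n.choose m : ℝ) * S (n - m) r * B m r (1 - qnum q⁻¹ x) * (qnum q x) ^ r := by
  have hy : (1 : ℝ) - qnum q⁻¹ x = qnum q (1 - x) :=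
    (qnum_one_sub q x hq0 (ne_of_lt hq1)).symm
  have k := key_id S B hS hB r n hrn (qnum q (1 - x))
  rw [hy, ← Finset.sum_mul, ← k]
  unfold qBernstein
  ring
end

section
/- For all natural numbers r ≤ n and reals x, 0 < q < 1, the identity Σ_{j=0}^{n} C(n, j) · B_{r,j}(x, q) · E_{n-j}([x]_{q^{-1}}) = C(n, r) · ([x]_q)^r · E_{n-r}(1) holds, where E_k denotes the k-th Euler polynomial (with B_{r,j}(x,q) = 0 for j < r). -/
open PowerSeries

lemma euler_add (E : ℕ → ℝ → ℝ)
    (hE : ∀ y : ℝ,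
      (PowerSeries.exp ℝ + 1) * PowerSeries.mk (fun k => E k y / (k.factorial : ℝ)) =
        (2 : ℝ) • PowerSeries.rescale y (PowerSeries.exp ℝ))
    (y : ℝ) (m : ℕ) :
    ∑ k ∈ Finset.range (m + 1),
        (m.choose k : ℝ) * E k y * (1 - y) ^ (m - k) = E m 1 := by
  have hne : (PowerSeries.exp ℝ + 1) ≠ 0 := by
    intro h
    have := congrArg (PowerSeries.constantCoeff (R := ℝ)) h
    simp [PowerSeries.constantCoeff_exp] at this
  have key : PowerSeries.mk (fun k => E k y / (k.factorial : ℝ)) *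
      PowerSeries.rescale (1 - y) (PowerSeries.exp ℝ) =
      PowerSeries.mk (fun k => E k 1 / (k.factorial : ℝ)) := by
    apply mul_left_cancel₀ hne
    rw [← mul_assoc, hE y, hE 1, smul_mul_assoc,
      PowerSeries.exp_mul_exp_eq_exp_add]
    norm_num
  have hc := congrArg (PowerSeries.coeff (R := ℝ) m) key
  rw [PowerSeries.coeff_mul, PowerSeries.coeff_mk,
    Finset.Nat.sum_antidiagonal_eq_sum_range_succ_mk] at hc
  simp only [PowerSeries.coeff_mk, PowerSeries.coeff_rescale, PowerSeries.coeff_exp,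
    eq_ratCast, Rat.cast_div, Rat.cast_one, Rat.cast_natCast] at hc
  have hc' : (m.factorial : ℝ) * ∑ k ∈ Finset.range (m + 1),
      E k y / k.factorial * ((1 - y) ^ (m - k) * (1 / (m - k).factorial)) =
      (m.factorial : ℝ) * (E m 1 / m.factorial) := by rw [hc]
  rw [Finset.mul_sum] at hc'
  have hm : (m.factorial : ℝ) ≠ 0 := Nat.cast_ne_zero.mpr m.factorial_ne_zero
  calc ∑ k ∈ Finset.range (m + 1), (m.choose k : ℝ) * E k y * (1 - y) ^ (m - k)
      = ∑ k ∈ Finset.range (m + 1), (m.factorial : ℝ) *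
        (E k y / k.factorial * ((1 - y) ^ (m - k) * (1 / (m - k).factorial))) := by
        apply Finset.sum_congr rfl
        intro k hk
        have hkm : k ≤ m := Nat.lt_succ_iff.mp (Finset.mem_range.mp hk)
        rw [Nat.cast_choose ℝ hkm]
        have hk1 : (k.factorial : ℝ) ≠ 0 := Nat.cast_ne_zero.mpr k.factorial_ne_zero
        have hk2 : ((m - k).factorial : ℝ) ≠ 0 := Nat.cast_ne_zero.mpr (m - k).factorial_ne_zero
        field_simp
    _ = E m 1 := by rw [hc']; field_simp

/-- Theorem 2.4 (case `Y = 1`): identity relating `q`-Bernstein polynomials and the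
Euler polynomials `E k y`, defined by the egf `2 e^{yv}/(e^v+1) = Σ E_k(y) v^k/k!`. -/
theorem stmt_9 (q x : ℝ) (hq0 : 0 < q) (hq1 : q < 1) (r n : ℕ) (hrn : r ≤ n)
    (E : ℕ → ℝ → ℝ)
    (hE : ∀ y : ℝ,
      (PowerSeries.exp ℝ + 1) * PowerSeries.mk (fun k => E k y / (k.factorial : ℝ)) =
        (2 : ℝ) • PowerSeries.rescale y (PowerSeries.exp ℝ)) :
    ∑ j ∈ Finset.range (n + 1),
        (n.choose j : ℝ) * qBernstein r j x q * E (n - j) (qnum q⁻¹ x) =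
      (n.choose r : ℝ) * (qnum q x) ^ r * E (n - r) 1 := by
  set y := qnum q⁻¹ x with hy
  have hsub : qnum q (1 - x) = 1 - y := qnum_one_sub q x hq0 (ne_of_lt hq1)
  set a := qnum q x with ha
  set m := n - r with hm
  have hterm : ∀ j, (n.choose j : ℝ) * qBernstein r j x q * E (n - j) y =
      (n.choose j : ℝ) * (j.choose r : ℝ) * a ^ r * (1 - y) ^ (j - r) * E (n - j) y := by
    intro j
    rw [qBernstein, hsub]
    ring
  simp only [hterm]
  have hzero : ∀ j ∈ Finset.range (n + 1), j ∉ Finset.Ico r (n + 1) →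
      (n.choose j : ℝ) * (j.choose r : ℝ) * a ^ r * (1 - y) ^ (j - r) * E (n - j) y = 0 := by
    intro j hj hj'
    have hjr : j < r := by
      simp only [Finset.mem_Ico, Finset.mem_range] at *
      omega
    rw [Nat.choose_eq_zero_of_lt hjr]
    simp
  have hsubset : Finset.Ico r (n + 1) ⊆ Finset.range (n + 1) := by
    rw [Finset.range_eq_Ico]
    exact Finset.Ico_subset_Ico_left (Nat.zero_le r)
  rw [← Finset.sum_subset hsubset hzero, Finset.sum_Ico_eq_sum_range]
  have hrange : n + 1 - r = m + 1 := by omega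
  rw [hrange]
  have hstep : ∀ k ∈ Finset.range (m + 1),
      (n.choose (r + k) : ℝ) * ((r + k).choose r : ℝ) * a ^ r * (1 - y) ^ (r + k - r) *
        E (n - (r + k)) y =
      (n.choose r : ℝ) * a ^ r * ((m.choose k : ℝ) * (1 - y) ^ k * E (m - k) y) := by
    intro k hk
    have hkm : k ≤ m := Nat.lt_succ_iff.mp (Finset.mem_range.mp hk)
    have h1 : r + k ≤ n := by omega
    have h2 : n.choose (r + k) * (r + k).choose r = n.choose r * m.choose k := by
      have := Nat.choose_mul (n := n) (Nat.le_add_right r k)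
      simpa [hm] using this
    have h3 : r + k - r = k := by omega
    have h4 : n - (r + k) = m - k := by omega
    rw [h3, h4, ← Nat.cast_mul, h2]
    push_cast
    ring
  rw [Finset.sum_congr rfl hstep, ← Finset.mul_sum]
  have hrefl : ∑ k ∈ Finset.range (m + 1), (m.choose k : ℝ) * (1 - y) ^ k * E (m - k) y =
      ∑ k ∈ Finset.range (m + 1), (m.choose k : ℝ) * E k y * (1 - y) ^ (m - k) := by
    rw [← Finset.sum_range_reflect (fun k => (m.choose k : ℝ) * E k y * (1 - y) ^ (m - k)) (m + 1)]
    apply Finset.sum_congr rfl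
    intro k hk
    have hkm : k ≤ m := Nat.lt_succ_iff.mp (Finset.mem_range.mp hk)
    have h5 : m + 1 - 1 - k = m - k := by omega
    rw [h5, Nat.choose_symm hkm, Nat.sub_sub_self hkm]
    ring
  rw [hrefl, euler_add E hE y m]
end

section
/- For all natural numbers r ≤ n and reals x, 0 < q < 1, the identity Σ_{j=0}^{n} C(n, j) · B_{r,j}(x, q) · B_{n-j}([x]_{q^{-1}}) = C(n, r) · ([x]_q)^r · B_{n-r}(1) holds, where B_k denotes the k-th Bernoulli polynomial (with B_{r,j}(x,q) = 0 for j < r). -/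
open PowerSeries

lemma exp_sub_one_ne : (PowerSeries.exp ℝ - 1) ≠ 0 := by
  intro h
  have h1 : (PowerSeries.coeff (R := ℝ) 1) (exp ℝ - 1) = 1 := by
    simp [PowerSeries.coeff_exp]
  rw [h] at h1
  simp at h1

lemma addition (B : ℕ → ℝ → ℝ)
    (hB : ∀ y : ℝ,
      (PowerSeries.exp ℝ - 1) * PowerSeries.mk (fun k => B k y / (k.factorial : ℝ)) =
        PowerSeries.X * PowerSeries.rescale y (PowerSeries.exp ℝ))
    (z t : ℝ) (m : ℕ) :
    B m (z + t) = ∑ k ∈ Finset.range (m + 1),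
      (m.choose k : ℝ) * B k z * t ^ (m - k) := by
  have key : PowerSeries.mk (fun k => B k z / (k.factorial : ℝ)) * rescale t (exp ℝ) =
      PowerSeries.mk (fun k => B k (z + t) / (k.factorial : ℝ)) := by
    apply mul_left_cancel₀ exp_sub_one_ne
    rw [← mul_assoc, hB z, hB (z + t), mul_assoc, exp_mul_exp_eq_exp_add]
  have hm := congrArg (PowerSeries.coeff (R := ℝ) m) key
  rw [PowerSeries.coeff_mul, Finset.Nat.sum_antidiagonal_eq_sum_range_succ_mk] at hm
  simp only [coeff_mk, coeff_rescale, PowerSeries.coeff_exp,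
    eq_ratCast, Rat.cast_inv] at hm
  have hm' : B m (z + t) / (m.factorial : ℝ) =
      ∑ k ∈ Finset.range (m + 1),
        B k z / (k.factorial : ℝ) * (t ^ (m - k) * (((m - k).factorial : ℝ))⁻¹) := by
    rw [← hm]
    apply Finset.sum_congr rfl
    intro k _
    push_cast
    ring
  have hmf : ((m.factorial : ℝ)) ≠ 0 := Nat.cast_ne_zero.2 m.factorial_ne_zero
  have := congrArg (fun u => (m.factorial : ℝ) * u) hm'
  rw [mul_div_cancel₀ _ hmf, Finset.mul_sum] at this
  rw [this]
  apply Finset.sum_congr rfl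
  intro k hk
  have hkm : k ≤ m := Nat.lt_succ_iff.mp (Finset.mem_range.mp hk)
  have hc : ((m.choose k : ℕ) : ℝ) * (k.factorial : ℝ) * ((m - k).factorial : ℝ)
      = (m.factorial : ℝ) := by
    exact_mod_cast congrArg (Nat.cast : ℕ → ℝ)
      (Nat.choose_mul_factorial_mul_factorial hkm)
  have hkf : ((k.factorial : ℝ)) ≠ 0 := Nat.cast_ne_zero.2 k.factorial_ne_zero
  have hmkf : (((m - k).factorial : ℝ)) ≠ 0 := Nat.cast_ne_zero.2 (m - k).factorial_ne_zero
  field_simp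
  rw [← hc]
  ring

lemma qnum_compl (q x : ℝ) (hq0 : 0 < q) (hq1 : q < 1) :
    qnum q (1 - x) = 1 - qnum q⁻¹ x := by
  unfold qnum
  have hqne : q ≠ 0 := ne_of_gt hq0
  have hq1' : q - 1 ≠ 0 := by nlinarith
  have h1 : q ^ (1 - x) = q * q ^ (-x) := by
    rw [Real.rpow_sub hq0, Real.rpow_one, Real.rpow_neg hq0.le, div_eq_mul_inv,
      ← Real.rpow_neg hq0.le]
  have h2 : q⁻¹ ^ x = q ^ (-x) := by
    rw [Real.inv_rpow hq0.le, ← Real.rpow_neg hq0.le]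
  rw [h1, h2]
  have hinv : q⁻¹ - 1 ≠ 0 := by
    intro h
    have : q⁻¹ = 1 := by linarith
    rw [inv_eq_one] at this
    exact hq1' (by linarith)
  have h1q : (1 : ℝ) - q ≠ 0 := by nlinarith
  rw [show q⁻¹ - 1 = (1 - q) / q from by field_simp]
  field_simp
  ring

/-- Theorem 2.5 (case `Y = 1`): identity relating `q`-Bernstein polynomials and the
Bernoulli polynomials `B k y`, defined by the egf `v e^{yv}/(e^v-1) = Σ B_k(y) v^k/k!`. -/
theorem stmt_10 (q x : ℝ) (hq0 : 0 < q) (hq1 : q < 1) (r n : ℕ) (hrn : r ≤ n)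
    (B : ℕ → ℝ → ℝ)
    (hB : ∀ y : ℝ,
      (PowerSeries.exp ℝ - 1) * PowerSeries.mk (fun k => B k y / (k.factorial : ℝ)) =
        PowerSeries.X * PowerSeries.rescale y (PowerSeries.exp ℝ)) :
    ∑ j ∈ Finset.range (n + 1),
        (n.choose j : ℝ) * qBernstein r j x q * B (n - j) (qnum q⁻¹ x) =
      (n.choose r : ℝ) * (qnum q x) ^ r * B (n - r) 1 := by
  set z := qnum q⁻¹ x with hz
  set c := qnum q x with hc
  have hw : qnum q (1 - x) = 1 - z := qnum_compl q x hq0 hq1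
  have hrhs : B (n - r) 1 = ∑ k ∈ Finset.range (n - r + 1),
      ((n - r).choose k : ℝ) * B k z * (1 - z) ^ (n - r - k) := by
    have := addition B hB z (1 - z) (n - r)
    simpa using this
  rw [hrhs]
  -- reflect the RHS sum
  rw [← Finset.sum_range_reflect (fun k => ((n - r).choose k : ℝ) * B k z * (1 - z) ^ (n - r - k))
    (n - r + 1)]
  -- split the LHS sum
  have hsplit : n + 1 = r + (n - r + 1) := by omega
  rw [hsplit, Finset.sum_range_add]
  have hzero : ∑ j ∈ Finset.range r,
      (n.choose j : ℝ) * qBernstein r j x q * B (n - j) z = 0 := by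
    apply Finset.sum_eq_zero
    intro j hj
    have : j.choose r = 0 := Nat.choose_eq_zero_of_lt (Finset.mem_range.mp hj)
    simp [qBernstein, this]
  rw [hzero, zero_add, Finset.mul_sum]
  apply Finset.sum_congr rfl
  intro i hi
  have hile : i ≤ n - r := Nat.lt_succ_iff.mp (Finset.mem_range.mp hi)
  have hrin : r + i ≤ n := by omega
  simp only [qBernstein, hw, ← hc]
  have e1 : n - r + 1 - 1 - i = n - r - i := by omega
  have e2 : r + i - r = i := by omega
  have e3 : n - (r + i) = n - r - i := by omega
  have e4 : n - r - (n - r - i) = i := by omega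
  rw [e1, e2, e3, e4]
  have hsymm : (n - r).choose (n - r - i) = (n - r).choose i :=
    Nat.choose_symm hile
  have hcm : (n.choose (r + i) : ℝ) * ((r + i).choose r : ℝ) =
      (n.choose r : ℝ) * ((n - r).choose i : ℝ) := by
    have := Nat.choose_mul (n := n) (Nat.le_add_right r i)
    have h2 : (r + i) - r = i := by omega
    rw [h2] at this
    exact_mod_cast congrArg (Nat.cast : ℕ → ℝ) this
  rw [hsymm]
  calc (n.choose (r + i) : ℝ) * (((r + i).choose r : ℝ) * c ^ r * (1 - z) ^ i) *
        B (n - r - i) z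
      = ((n.choose (r + i) : ℝ) * ((r + i).choose r : ℝ)) *
        (c ^ r * (1 - z) ^ i * B (n - r - i) z) := by ring
    _ = ((n.choose r : ℝ) * ((n - r).choose i : ℝ)) *
        (c ^ r * (1 - z) ^ i * B (n - r - i) z) := by rw [hcm]
    _ = (n.choose r : ℝ) * c ^ r * (((n - r).choose i : ℝ) * B (n - r - i) z * (1 - z) ^ i) := by
        ring
end

section
/- The Bell polynomial satisfies φ_k(y) = Σ_{m=0}^{k} y^m · S(k, m), where S(k, m) are the Stirling numbers of the second kind. Consequently, for Y ~ Poisson(α), the probabilistic q-Bernstein polynomials satisfy B_{r,n}^Y(x, q) = Σ_{m=0}^{n-r} C(n, r) · α^m · ([x]_q)^r · (1 - [x]_{q^{-1}})^m · S(n-r, m). -/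
open PowerSeries

lemma aux_derivative_exp : PowerSeries.derivative ℝ (PowerSeries.exp ℝ) = PowerSeries.exp ℝ := by
  ext n
  rw [PowerSeries.coeff_derivative]
  simp only [PowerSeries.coeff_exp, eq_ratCast, Rat.cast_div]
  push_cast
  rw [Nat.factorial_succ]
  push_cast
  field_simp

/-- The main coefficient identity: `coeff k (Φ y) = (Σ_{m≤k} y^m S(k,m)) / k!`. -/
lemma aux_key (Φ : ℝ → PowerSeries ℝ)
    (hΦ0 : ∀ y : ℝ, PowerSeries.constantCoeff (Φ y) = 1)
    (hΦ1 : ∀ y : ℝ, PowerSeries.derivative ℝ (Φ y) = y • (PowerSeries.exp ℝ * Φ y))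
    (S : ℕ → ℕ → ℝ)
    (hS : ∀ m : ℕ, PowerSeries.mk (fun k => S k m / (k.factorial : ℝ)) =
      ((m.factorial : ℝ)⁻¹) • (PowerSeries.exp ℝ - 1) ^ m) :
    ∀ (k : ℕ) (y : ℝ), PowerSeries.coeff k (Φ y) =
      (∑ m ∈ Finset.range (k + 1), y ^ m * S k m) / (k.factorial : ℝ) := by
  -- basic facts about S
  have hScoeff : ∀ k m : ℕ, S k m / (k.factorial : ℝ) =
      PowerSeries.coeff k (((m.factorial : ℝ)⁻¹) • (PowerSeries.exp ℝ - 1) ^ m) := by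
    intro k m
    rw [← hS m, PowerSeries.coeff_mk]
  have hS00 : S 0 0 = 1 := by
    have := hScoeff 0 0
    simpa using this
  have hS0 : ∀ k : ℕ, 0 < k → S k 0 = 0 := by
    intro k hk
    have := hScoeff k 0
    rw [pow_zero] at this
    have h2 : PowerSeries.coeff k ((1 : ℝ) • (1 : PowerSeries ℝ)) = 0 := by
      simp [PowerSeries.coeff_one, Nat.pos_iff_ne_zero.mp hk]
    simp only [Nat.factorial_zero, Nat.cast_one, inv_one] at this
    rw [h2] at this
    have hfac : (k.factorial : ℝ) ≠ 0 := Nat.cast_ne_zero.mpr k.factorial_ne_zero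
    field_simp at this
    simpa using this
  have hSvanish : ∀ k m : ℕ, k < m → S k m = 0 := by
    intro k m hkm
    have hdvd : (PowerSeries.X : PowerSeries ℝ) ^ m ∣ (PowerSeries.exp ℝ - 1) ^ m :=
      pow_dvd_pow_of_dvd (by rw [PowerSeries.X_dvd_iff]; simp) m
    have hc : PowerSeries.coeff k ((PowerSeries.exp ℝ - 1) ^ m) = 0 :=
      PowerSeries.X_pow_dvd_iff.mp hdvd k hkm
    have := hScoeff k m
    rw [map_smul, hc, smul_zero] at this
    have hfac : (k.factorial : ℝ) ≠ 0 := Nat.cast_ne_zero.mpr k.factorial_ne_zero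
    field_simp at this
    simpa using this
  -- the recurrence for S from the egf
  have hrec : ∀ k m : ℕ, S (k+1) (m+1) / ((k+1).factorial : ℝ) * ((k : ℝ)+1) =
      ∑ p ∈ Finset.HasAntidiagonal.antidiagonal k,
        PowerSeries.coeff p.1 (PowerSeries.exp ℝ) * (S p.2 m / (p.2.factorial : ℝ)) := by
    intro k m
    have hd1 : PowerSeries.derivative ℝ (PowerSeries.exp ℝ - 1) = PowerSeries.exp ℝ := by
      rw [map_sub, aux_derivative_exp, Derivation.map_one_eq_zero, sub_zero]
    have hT : PowerSeries.derivative ℝ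
        (PowerSeries.mk (fun k => S k (m+1) / (k.factorial : ℝ))) =
        PowerSeries.exp ℝ * PowerSeries.mk (fun k => S k m / (k.factorial : ℝ)) := by
      rw [hS (m+1), hS m, Derivation.map_smul, Derivation.leibniz_pow, hd1,
        Nat.add_sub_cancel]
      rw [smul_eq_mul (α := PowerSeries ℝ), ← Nat.cast_smul_eq_nsmul ℝ, smul_smul]
      have hc : ((m+1).factorial : ℝ)⁻¹ * ((m+1 : ℕ) : ℝ) = ((m.factorial : ℝ))⁻¹ := by
        rw [Nat.factorial_succ]
        push_cast
        have h1 : ((m.factorial : ℝ)) ≠ 0 := Nat.cast_ne_zero.mpr m.factorial_ne_zero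
        have h2 : ((m : ℝ) + 1) ≠ 0 := by positivity
        field_simp
      rw [hc, mul_smul_comm, mul_comm ((PowerSeries.exp ℝ - 1) ^ m) (PowerSeries.exp ℝ)]
    have h2 := congrArg (PowerSeries.coeff k) hT
    rw [PowerSeries.coeff_derivative, PowerSeries.coeff_mk, PowerSeries.coeff_mul] at h2
    simp only [PowerSeries.coeff_mk] at h2
    exact h2
  -- main induction
  intro k
  induction k using Nat.strong_induction_on with
  | _ k ih =>
    intro y
    match k with
    | 0 =>
      rw [PowerSeries.coeff_zero_eq_constantCoeff, hΦ0 y]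
      simp [hS00]
    | Nat.succ k =>
      have hk1 : ((k:ℝ) + 1) ≠ 0 := by positivity
      apply mul_right_cancel₀ hk1
      -- LHS
      have hL : PowerSeries.coeff (k+1) (Φ y) * ((k:ℝ)+1) =
          PowerSeries.coeff k (PowerSeries.derivative ℝ (Φ y)) := by
        rw [PowerSeries.coeff_derivative]
      rw [hL, hΦ1 y, map_smul, PowerSeries.coeff_mul, smul_eq_mul]
      -- rewrite each coeff of Φ by the induction hypothesis
      have hsum : ∀ p ∈ Finset.HasAntidiagonal.antidiagonal k,
          PowerSeries.coeff p.1 (PowerSeries.exp ℝ) * PowerSeries.coeff p.2 (Φ y) =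
          PowerSeries.coeff p.1 (PowerSeries.exp ℝ) *
            ((∑ m ∈ Finset.range (k + 1), y ^ m * S p.2 m) / (p.2.factorial : ℝ)) := by
        intro p hp
        have hp2 : p.2 ≤ k := Finset.HasAntidiagonal.antidiagonal.snd_le hp
        have hlt : p.2 < k + 1 := by omega
        rw [ih p.2 (by omega) y]
        congr 2
        refine Finset.sum_subset ?_ ?_
        · intro t ht
          simp only [Finset.mem_range] at ht ⊢
          omega
        · intro t ht hnt
          simp only [Finset.mem_range] at ht hnt
          rw [hSvanish p.2 t (by omega), mul_zero]
      rw [Finset.sum_congr rfl hsum]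
      simp only [Nat.succ_eq_add_one]
      rw [div_mul_eq_mul_div]
      -- split off m = 0 and shift
      have hsplit : ∑ m ∈ Finset.range (k + 1 + 1), y ^ m * S (k+1) m =
          ∑ m ∈ Finset.range (k + 1), y ^ (m+1) * S (k+1) (m+1) := by
        rw [Finset.sum_range_succ']
        rw [hS0 (k+1) (Nat.succ_pos k)]
        simp
      rw [hsplit]
      have hexp : (∑ m ∈ Finset.range (k + 1), y ^ (m+1) * S (k+1) (m+1)) * ((k:ℝ)+1) /
            ((k+1).factorial : ℝ) =
          ∑ m ∈ Finset.range (k + 1), y ^ (m+1) *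
            (S (k+1) (m+1) / ((k+1).factorial : ℝ) * ((k:ℝ)+1)) := by
        rw [Finset.sum_mul, Finset.sum_div]
        exact Finset.sum_congr rfl fun m _ => by ring
      rw [hexp]
      have hrw : ∀ m ∈ Finset.range (k+1), y ^ (m+1) *
            (S (k+1) (m+1) / ((k+1).factorial : ℝ) * ((k:ℝ)+1)) =
          y ^ (m+1) * ∑ p ∈ Finset.HasAntidiagonal.antidiagonal k,
            PowerSeries.coeff p.1 (PowerSeries.exp ℝ) * (S p.2 m / (p.2.factorial : ℝ)) := by
        intro m _
        rw [hrec k m]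
      rw [Finset.sum_congr rfl hrw, Finset.mul_sum]
      have hL2 : ∀ p ∈ Finset.HasAntidiagonal.antidiagonal k,
          y * (PowerSeries.coeff p.1 (PowerSeries.exp ℝ) *
            ((∑ m ∈ Finset.range (k + 1), y ^ m * S p.2 m) / (p.2.factorial : ℝ))) =
          ∑ m ∈ Finset.range (k + 1), y ^ (m+1) *
            (PowerSeries.coeff p.1 (PowerSeries.exp ℝ) * (S p.2 m / (p.2.factorial : ℝ))) := by
        intro p _
        rw [Finset.sum_div, Finset.mul_sum, Finset.mul_sum]
        exact Finset.sum_congr rfl fun m _ => by ring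
      rw [Finset.sum_congr rfl hL2, Finset.sum_comm]
      refine Finset.sum_congr rfl fun m _ => ?_
      rw [Finset.mul_sum]

/-- Theorem 3.2: the Bell polynomials (`φ k y = k! · coeff k (Φ y)` where
`Φ y = e^{y(e^v-1)}` is characterized by `F(0) = 1`, `F' = y e^v F`) satisfy
`φ_k(y) = Σ_{m=0}^k y^m S(k,m)` where `S` are the Stirling numbers of the second kind
(egf `(e^v-1)^m/m!`); consequently, for `Y ~ Poisson(α)` the probabilistic
`q`-Bernstein polynomials `B_{r,n}^Y(x,q)` (given by `n!` times the `n`-th coefficient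
of `(v[x]_q)^r/r! · e^{α(1-[x]_{q⁻¹})(e^v-1)}`) have the stated expansion. -/
theorem stmt_12 (α : ℝ) (hα : 0 < α) (q x : ℝ) (hq0 : 0 < q) (hq1 : q < 1)
    (r n : ℕ) (hrn : r ≤ n)
    (Φ : ℝ → PowerSeries ℝ)
    (hΦ0 : ∀ y : ℝ, PowerSeries.constantCoeff (Φ y) = 1)
    (hΦ1 : ∀ y : ℝ, PowerSeries.derivative ℝ (Φ y) = y • (PowerSeries.exp ℝ * Φ y))
    (φ : ℕ → ℝ → ℝ)
    (hφ : ∀ (k : ℕ) (y : ℝ), φ k y = (k.factorial : ℝ) * PowerSeries.coeff k (Φ y))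
    (S : ℕ → ℕ → ℝ)
    (hS : ∀ m : ℕ, PowerSeries.mk (fun k => S k m / (k.factorial : ℝ)) =
      ((m.factorial : ℝ)⁻¹) • (PowerSeries.exp ℝ - 1) ^ m) :
    (∀ (k : ℕ) (y : ℝ), φ k y = ∑ m ∈ Finset.range (k + 1), y ^ m * S k m) ∧
    (n.factorial : ℝ) * PowerSeries.coeff n
        (((qnum q x) ^ r / (r.factorial : ℝ)) •
          (PowerSeries.X ^ r * Φ (α * (1 - qnum q⁻¹ x)))) =
      ∑ m ∈ Finset.range (n - r + 1),
        (n.choose r : ℝ) * α ^ m * (qnum q x) ^ r * (1 - qnum q⁻¹ x) ^ m * S (n - r) m := by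
  have key := aux_key Φ hΦ0 hΦ1 S hS
  constructor
  · intro k y
    rw [hφ, key k y]
    have hfac : (k.factorial : ℝ) ≠ 0 := Nat.cast_ne_zero.mpr k.factorial_ne_zero
    field_simp
  · rw [map_smul, smul_eq_mul]
    rw [PowerSeries.coeff_X_pow_mul' _ r n, if_pos hrn]
    rw [key (n - r) (α * (1 - qnum q⁻¹ x))]
    rw [Finset.sum_div, Finset.mul_sum, Finset.mul_sum]
    refine Finset.sum_congr rfl fun m _ => ?_
    rw [Nat.cast_choose ℝ hrn, mul_pow]
    have h1 : (r.factorial : ℝ) ≠ 0 := Nat.cast_ne_zero.mpr r.factorial_ne_zero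
    have h2 : (((n-r).factorial : ℝ)) ≠ 0 := Nat.cast_ne_zero.mpr (n-r).factorial_ne_zero
    field_simp
end

section
/- Let c be a real number and 0 ≤ p ≤ 1. As an identity of formal power series in v, (1 + p(e^v - 1))^c = Σ_{n≥0} (Σ_{m=0}^{n} p^m · (c)_m · S(n, m)) · v^n / n!, where (c)_m = c(c-1)⋯(c-m+1) is the falling factorial and S(n, m) are Stirling numbers of the second kind. Consequently, for a Bernoulli(p) random variable Y, the probabilistic q-Bernstein polynomials satisfy B_{r,n}^Y(x, q) = ([x]_q)^r · C(n, r) · Σ_{m=0}^{n-r} p^m · (1 - [x]_{q^{-1}})_m · S(n-r, m). -/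
open PowerSeries

/-- The falling factorial `(c)_m = c(c-1)⋯(c-m+1)` of a real number. -/
noncomputable def fallFact (c : ℝ) (m : ℕ) : ℝ := ∏ i ∈ Finset.range m, (c - i)

/-- The real power `G^c` of a formal power series `G` (with constant term `1`),
defined via the binomial series `(1+u)^c = Σ_m (c)_m u^m/m!` with `u = G - 1`:
since `(G-1)^m` has order `≥ m`, only finitely many terms contribute to each
coefficient. -/
noncomputable def psRpow (G : PowerSeries ℝ) (c : ℝ) : PowerSeries ℝ :=
  PowerSeries.mk fun n => ∑ m ∈ Finset.range (n + 1),
    (fallFact c m / (m.factorial : ℝ)) * PowerSeries.coeff n ((G - 1) ^ m)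

/-- Theorem 3.3: binomial-series expansion of `(1 + p(e^v-1))^c` through Stirling
numbers of the second kind `S` (egf `(e^v-1)^m/m!`), and the resulting formula for
the probabilistic `q`-Bernstein polynomials attached to `Y ~ Bernoulli(p)` (defined
as `n!` times the `n`-th coefficient of `(v[x]_q)^r/r! · (1-p+pe^v)^{1-[x]_{q⁻¹}}`). -/
theorem stmt_13 (p : ℝ) (hp0 : 0 ≤ p) (hp1 : p ≤ 1) (c : ℝ) (q x : ℝ)
    (hq0 : 0 < q) (hq1 : q < 1) (r n : ℕ) (hrn : r ≤ n)
    (S : ℕ → ℕ → ℝ)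
    (hS : ∀ m : ℕ, PowerSeries.mk (fun k => S k m / (k.factorial : ℝ)) =
      ((m.factorial : ℝ)⁻¹) • (PowerSeries.exp ℝ - 1) ^ m) :
    (∀ k : ℕ, PowerSeries.coeff k (psRpow (1 + p • (PowerSeries.exp ℝ - 1)) c) =
      (∑ m ∈ Finset.range (k + 1), p ^ m * fallFact c m * S k m) / (k.factorial : ℝ)) ∧
    (n.factorial : ℝ) * PowerSeries.coeff n
        (((qnum q x) ^ r / (r.factorial : ℝ)) •
          (PowerSeries.X ^ r *
            psRpow (1 + p • (PowerSeries.exp ℝ - 1)) (1 - qnum q⁻¹ x))) =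
      (qnum q x) ^ r * (n.choose r : ℝ) *
        ∑ m ∈ Finset.range (n - r + 1),
          p ^ m * fallFact (1 - qnum q⁻¹ x) m * S (n - r) m := by
  have hcoeff : ∀ (c : ℝ) (k : ℕ),
      PowerSeries.coeff k (psRpow (1 + p • (PowerSeries.exp ℝ - 1)) c) =
      (∑ m ∈ Finset.range (k + 1), p ^ m * fallFact c m * S k m) / (k.factorial : ℝ) := by
    intro c k
    have hA : (1 + p • (PowerSeries.exp ℝ - 1)) - 1 = p • (PowerSeries.exp ℝ - 1) := by ring
    have hSm : ∀ m : ℕ, PowerSeries.coeff k ((PowerSeries.exp ℝ - 1) ^ m)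
        = (m.factorial : ℝ) * (S k m / (k.factorial : ℝ)) := by
      intro m
      have := congrArg (PowerSeries.coeff k) (hS m)
      simp only [PowerSeries.coeff_mk, map_smul, smul_eq_mul] at this
      have hm : (m.factorial : ℝ) ≠ 0 := Nat.cast_ne_zero.mpr m.factorial_ne_zero
      field_simp at this ⊢
      linarith [this]
    simp only [psRpow, PowerSeries.coeff_mk, hA, smul_pow, map_smul, smul_eq_mul, hSm]
    rw [Finset.sum_div]
    refine Finset.sum_congr rfl fun m _ => ?_
    have hm : (m.factorial : ℝ) ≠ 0 := Nat.cast_ne_zero.mpr m.factorial_ne_zero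
    have hk : (k.factorial : ℝ) ≠ 0 := Nat.cast_ne_zero.mpr k.factorial_ne_zero
    field_simp
  refine ⟨hcoeff c, ?_⟩
  rw [map_smul, smul_eq_mul]
  have hn : n = (n - r) + r := (Nat.sub_add_cancel hrn).symm
  rw [show (PowerSeries.coeff n) (PowerSeries.X ^ r *
      psRpow (1 + p • (PowerSeries.exp ℝ - 1)) (1 - qnum q⁻¹ x)) =
      (PowerSeries.coeff (n - r)) (psRpow (1 + p • (PowerSeries.exp ℝ - 1))
        (1 - qnum q⁻¹ x)) by
    conv_lhs => rw [hn]
    exact PowerSeries.coeff_X_pow_mul _ r (n - r)]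
  rw [hcoeff (1 - qnum q⁻¹ x) (n - r)]
  rw [Nat.cast_choose ℝ hrn]
  have h1 : (r.factorial : ℝ) ≠ 0 := Nat.cast_ne_zero.mpr r.factorial_ne_zero
  have h2 : ((n - r).factorial : ℝ) ≠ 0 := Nat.cast_ne_zero.mpr (n - r).factorial_ne_zero
  field_simp
end

section
/- For Y ~ Binomial(N, p), the probabilistic q-Bernstein polynomials satisfy B_{r,n}^Y(x, q) = ([x]_q)^r · C(n, r) · Σ_{m=0}^{n-r} p^m · (N(1 - [x]_{q^{-1}}))_m · S(n-r, m), where (y)_m denotes the falling factorial y(y-1)⋯(y-m+1) of a real number and S(n, m) the Stirling numbers of the second kind. -/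
open PowerSeries

/-- Theorem 3.4: the probabilistic `q`-Bernstein polynomials attached to
`Y ~ Binomial(N,p)` (defined as `n!` times the `n`-th coefficient of
`(v[x]_q)^r/r! · (1-p+pe^v)^{N(1-[x]_{q⁻¹})}`) expand through the Stirling numbers
of the second kind `S` and falling factorials of `N(1-[x]_{q⁻¹})`. -/
theorem stmt_14 (N : ℕ) (p : ℝ) (hp0 : 0 ≤ p) (hp1 : p ≤ 1) (q x : ℝ)
    (hq0 : 0 < q) (hq1 : q < 1) (r n : ℕ) (hrn : r ≤ n)
    (S : ℕ → ℕ → ℝ)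
    (hS : ∀ m : ℕ, PowerSeries.mk (fun k => S k m / (k.factorial : ℝ)) =
      ((m.factorial : ℝ)⁻¹) • (PowerSeries.exp ℝ - 1) ^ m) :
    (n.factorial : ℝ) * PowerSeries.coeff n
        (((qnum q x) ^ r / (r.factorial : ℝ)) •
          (PowerSeries.X ^ r *
            psRpow (1 + p • (PowerSeries.exp ℝ - 1)) ((N : ℝ) * (1 - qnum q⁻¹ x)))) =
      (qnum q x) ^ r * (n.choose r : ℝ) *
        ∑ m ∈ Finset.range (n - r + 1),
          p ^ m * fallFact ((N : ℝ) * (1 - qnum q⁻¹ x)) m * S (n - r) m := by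
  set c : ℝ := (N : ℝ) * (1 - qnum q⁻¹ x) with hc
  have hcoeff : PowerSeries.coeff n
      (PowerSeries.X ^ r * psRpow (1 + p • (PowerSeries.exp ℝ - 1)) c)
      = PowerSeries.coeff (n - r) (psRpow (1 + p • (PowerSeries.exp ℝ - 1)) c) := by
    conv_lhs => rw [show n = (n - r) + r from (Nat.sub_add_cancel hrn).symm]
    rw [PowerSeries.coeff_X_pow_mul]
  have hE : ∀ m : ℕ, PowerSeries.coeff (n - r) ((PowerSeries.exp ℝ - 1) ^ m)
      = (m.factorial : ℝ) * (S (n - r) m / ((n - r).factorial : ℝ)) := by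
    intro m
    have h := congrArg (PowerSeries.coeff (n - r)) (hS m)
    rw [PowerSeries.coeff_mk, map_smul, smul_eq_mul] at h
    rw [h]
    field_simp
  have hG : (1 + p • (PowerSeries.exp ℝ - 1)) - 1 = p • (PowerSeries.exp ℝ - 1) :=
    add_sub_cancel_left 1 _
  rw [map_smul, smul_eq_mul, hcoeff, psRpow, PowerSeries.coeff_mk]
  have hterm : ∀ m : ℕ,
      fallFact c m / (m.factorial : ℝ) *
        PowerSeries.coeff (n - r) (((1 + p • (PowerSeries.exp ℝ - 1)) - 1) ^ m)
      = fallFact c m / (m.factorial : ℝ) *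
          (p ^ m * ((m.factorial : ℝ) * (S (n - r) m / ((n - r).factorial : ℝ)))) := by
    intro m
    rw [hG, smul_pow, map_smul, smul_eq_mul, hE]
  rw [Finset.sum_congr rfl fun m _ => hterm m]
  rw [Nat.cast_choose ℝ hrn]
  rw [Finset.mul_sum, Finset.mul_sum, Finset.mul_sum]
  refine Finset.sum_congr rfl fun m _ => ?_
  have hm : (m.factorial : ℝ) ≠ 0 := Nat.cast_ne_zero.mpr m.factorial_ne_zero
  have hr : (r.factorial : ℝ) ≠ 0 := Nat.cast_ne_zero.mpr r.factorial_ne_zero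
  have hnr : ((n - r).factorial : ℝ) ≠ 0 := Nat.cast_ne_zero.mpr (n - r).factorial_ne_zero
  field_simp
end

section
/- For 0 < q < 1, q ≠ 1, natural numbers 1 ≤ r ≤ n, and real x, the partial derivative of the q-Bernstein polynomial B_{r,n}(x, q) = C(n, r) ([x]_q)^r ([1-x]_q)^{n-r} with respect to x equals n · q^x · (ln q/(q-1)) · B_{r-1,n-1}(x, q) + n · q^{1-x} · (ln q/(1-q)) · B_{r,n-1}(x, q). -/
lemma hasDerivAt_qnum (q : ℝ) (hq0 : 0 < q) (x : ℝ) :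
    HasDerivAt (fun t => qnum q t) (q ^ x * Real.log q / (q - 1)) x := by
  have h := (Real.hasStrictDerivAt_const_rpow hq0 x).hasDerivAt
  have h2 := (h.sub_const 1).div_const (q - 1)
  simpa [qnum] using h2

/-- Theorem 2.7 (case `Y = 1`): the derivative of the `q`-Bernstein polynomial
with respect to `x` is
`n q^x (ln q/(q-1)) B_{r-1,n-1}(x,q) + n q^{1-x} (ln q/(1-q)) B_{r,n-1}(x,q)`. -/
theorem stmt_19 (q : ℝ) (hq0 : 0 < q) (hq1 : q < 1) (r n : ℕ) (hr : 1 ≤ r) (hrn : r ≤ n)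
    (x : ℝ) :
    HasDerivAt (fun t : ℝ => qBernstein r n t q)
      ((n : ℝ) * q ^ x * (Real.log q / (q - 1)) * qBernstein (r - 1) (n - 1) x q +
        (n : ℝ) * q ^ (1 - x) * (Real.log q / (1 - q)) * qBernstein r (n - 1) x q)
      x := by
  obtain ⟨s, rfl⟩ : ∃ s, r = s + 1 := ⟨r - 1, by omega⟩
  obtain ⟨m, rfl⟩ : ∃ m, n = m + 1 := ⟨n - 1, by omega⟩
  have hsm : s ≤ m := by omega
  have hq1' : q - 1 ≠ 0 := by linarith
  have hq1'' : (1 : ℝ) - q ≠ 0 := by linarith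
  have hf := hasDerivAt_qnum q hq0 x
  have hg : HasDerivAt (fun t => qnum q (1 - t))
      (q ^ (1 - x) * Real.log q / (q - 1) * (-1)) x :=
    (hasDerivAt_qnum q hq0 (1 - x)).comp x ((hasDerivAt_id x).const_sub 1)
  have hmain := ((hf.fun_pow (s + 1)).fun_mul (hg.fun_pow (m - s))).const_mul
    ((m + 1).choose (s + 1) : ℝ)
  set f := qnum q x
  set g := qnum q (1 - x)
  set L := Real.log q
  have hfun : (fun t : ℝ => qBernstein (s + 1) (m + 1) t q)
      = fun t => ((m + 1).choose (s + 1) : ℝ)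
          * (qnum q t ^ (s + 1) * qnum q (1 - t) ^ (m - s)) := by
    funext t; simp [qBernstein, mul_assoc]
  rw [hfun]
  convert hmain using 1
  · rfl
  · rfl
  simp only [Nat.add_sub_cancel, qBernstein]
  have hdiv : L / (1 - q) = -(L / (q - 1)) := by field_simp; ring
  rw [hdiv]
  have hnat1 : (m + 1) * m.choose s = (s + 1) * ((m + 1).choose (s + 1)) := by
    simpa [Nat.succ_eq_add_one, Nat.mul_comm] using Nat.add_one_mul_choose_eq m s
  have h1 : ((m : ℝ) + 1) * (m.choose s : ℝ)
      = ((s : ℝ) + 1) * (((m + 1).choose (s + 1) : ℕ) : ℝ) := by exact_mod_cast hnat1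
  rcases eq_or_lt_of_le hsm with h | h
  · subst h
    simp only [Nat.sub_self, pow_zero, Nat.choose_self, Nat.choose_succ_self,
      Nat.cast_zero, Nat.cast_one]
    push_cast
    ring
  · obtain ⟨k, hk⟩ : ∃ k, m - s = k + 1 := ⟨m - s - 1, by omega⟩
    have hnat2 : (m + 1) * m.choose (s + 1) = (k + 1) * ((m + 1).choose (s + 1)) := by
      have t := Nat.choose_mul_succ_eq m (s + 1)
      have e : m + 1 - (s + 1) = k + 1 := by omega
      rw [e] at t
      simpa [Nat.mul_comm] using t
    have h2 : ((m : ℝ) + 1) * (m.choose (s + 1) : ℝ)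
        = ((k : ℝ) + 1) * (((m + 1).choose (s + 1) : ℕ) : ℝ) := by exact_mod_cast hnat2
    have e2 : m - (s + 1) = k := by omega
    rw [hk, e2]
    simp only [Nat.add_sub_cancel]
    push_cast
    linear_combination (q ^ x * (L / (q - 1)) * f ^ s * g ^ (k + 1)) * h1
      - (q ^ (1 - x) * (L / (q - 1)) * f ^ (s + 1) * g ^ k) * h2
end
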